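/- arXiv:1304.2843 — 4 statements merged into one kernel-verified Lean document; each statement's English description precedes it below -/
import Mathlib

section
/- Let m ≥ 2 be an integer, let H be a real-valued homogeneous polynomial of degree 2m containing no harmonic terms, and let α ∈ ℂ∖{0}. If H_{j,q̄}(α) = 0 for all integers j, q ≥ 1 with j + q < 2m, then there exist a ∈ ℝ∖{0} and ν ∈ ℝ such that H(z) = a((2Re(e^{iν}z))^{2m} − 2Re((e^{iν}z)^{2m})) for all z ∈ ℂ and Re(e^{iν}α) = 0. -/
open Complex Finset Metric Filter Topology Asymptotics
open scoped ENNReal NNReal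

noncomputable section

/-- `Hpoly m a z = Σ_{j=1}^{2m-1} a_{2m-j} z^j conj(z)^{2m-j}`. -/
def Hpoly (m : ℕ) (a : ℕ → ℂ) (z : ℂ) : ℂ :=
  ∑ j ∈ Finset.Icc 1 (2 * m - 1), a (2 * m - j) * z ^ j * (starRingEnd ℂ z) ^ (2 * m - j)

/-- The coefficients `a` give a real-valued polynomial that is not identically zero. -/
def GoodCoeff (m : ℕ) (a : ℕ → ℂ) : Prop :=
  (∀ j ∈ Finset.Icc 1 (2 * m - 1), a j = starRingEnd ℂ (a (2 * m - j))) ∧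
  (∃ j ∈ Finset.Icc 1 (2 * m - 1), a j ≠ 0)

/-- Subharmonicity: the Laplacian is a nonnegative real number at every point. -/
def SubharmonicCoeff (m : ℕ) (a : ℕ → ℂ) : Prop :=
  ∀ z : ℂ,
    ((4 : ℂ) * ∑ j ∈ Finset.Icc 1 (2 * m - 1),
      (j : ℂ) * ((2 * m - j : ℕ) : ℂ) * a (2 * m - j) * z ^ (j - 1) *
        (starRingEnd ℂ z) ^ (2 * m - j - 1)).im = 0 ∧
    0 ≤ ((4 : ℂ) * ∑ j ∈ Finset.Icc 1 (2 * m - 1),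
      (j : ℂ) * ((2 * m - j : ℕ) : ℂ) * a (2 * m - j) * z ^ (j - 1) *
        (starRingEnd ℂ z) ^ (2 * m - j - 1)).re

/-- The model domain `M_H`. -/
def modelM (H : ℂ → ℝ) : Set (ℂ × ℂ) := {z : ℂ × ℂ | z.2.re + H z.1 < 0}

/-- The tube domain `Ω_m`. -/
def OmegaM (m : ℕ) : Set (ℂ × ℂ) := {z : ℂ × ℂ | z.2.re + z.1.re ^ (2 * m) < 0}

/-- `f` is a biholomorphism from `Ω₁` onto `Ω₂`. -/
def IsBiholoOn (Ω₁ Ω₂ : Set (ℂ × ℂ)) (f : ℂ × ℂ → ℂ × ℂ) : Prop :=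
  DifferentiableOn ℂ f Ω₁ ∧ Set.MapsTo f Ω₁ Ω₂ ∧
    ∃ g : ℂ × ℂ → ℂ × ℂ, DifferentiableOn ℂ g Ω₂ ∧ Set.MapsTo g Ω₂ Ω₁ ∧
      (∀ z ∈ Ω₁, g (f z) = z) ∧ (∀ w ∈ Ω₂, f (g w) = w)

/-- `f` is an automorphism of `Ω`. -/
def IsAutomorphismOf (Ω : Set (ℂ × ℂ)) (f : ℂ × ℂ → ℂ × ℂ) : Prop :=
  IsBiholoOn Ω Ω f

/-- Mixed Wirtinger derivative `H_{j,q̄}`. -/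
def Hmix (m : ℕ) (a : ℕ → ℂ) (j q : ℕ) (z : ℂ) : ℂ :=
  ∑ k ∈ (Finset.Icc j (2 * m - 1)).filter (fun k => q ≤ 2 * m - k),
    a (2 * m - k) * (k.descFactorial j : ℂ) * ((2 * m - k).descFactorial q : ℂ) *
      z ^ (k - j) * (starRingEnd ℂ z) ^ (2 * m - k - q)

/-- Holomorphic Wirtinger derivative `H_j`. -/
def Hhol (m : ℕ) (a : ℕ → ℂ) (j : ℕ) (z : ℂ) : ℂ :=
  ∑ k ∈ Finset.Icc j (2 * m - 1),
    a (2 * m - k) * (k.descFactorial j : ℂ) * z ^ (k - j) * (starRingEnd ℂ z) ^ (2 * m - k)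

/-- `ε(a) = |Re a₂ + H(a₁)|`. -/
def epsAt (H : ℂ → ℝ) (p : ℂ × ℂ) : ℝ := |p.2.re + H p.1|

/-- The `(j,q)` coefficient of the rescaled polynomial `H_{a,τ}`. -/
def scaledCoeff (m : ℕ) (a : ℕ → ℂ) (H : ℂ → ℝ) (p : ℂ × ℂ) (τ : ℝ) (j q : ℕ) : ℂ :=
  Hmix m a j q p.1 * (τ : ℂ) ^ (j + q) /
    ((j.factorial : ℂ) * (q.factorial : ℂ) * (epsAt H p : ℂ))

/-- Index pairs `(j,q)` with `j, q ≥ 1` and `j + q ≤ 2m`. -/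
def coeffPairs (m : ℕ) : Finset (ℕ × ℕ) :=
  (Finset.Icc 1 (2 * m) ×ˢ Finset.Icc 1 (2 * m)).filter (fun jq => jq.1 + jq.2 ≤ 2 * m)

/-- `‖H_{a,τ}‖`, the maximum modulus of the coefficients of the rescaled polynomial. -/
def HscaledNorm (m : ℕ) (a : ℕ → ℂ) (H : ℂ → ℝ) (p : ℂ × ℂ) (τ : ℝ) : ℝ :=
  (((coeffPairs m).sup fun jq =>
    Real.toNNReal ‖scaledCoeff m a H p τ jq.1 jq.2‖) : ℝ≥0)

/-- Vanishing order at `0 ∈ ℂ` of a map, via big-O estimates. -/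
def vOrder {E : Type*} [NormedAddCommGroup E] (u : ℂ → E) : ℝ≥0∞ :=
  sSup {c : ℝ≥0∞ | ∃ k : ℕ, c = (k : ℝ≥0∞) ∧ u =O[𝓝 (0 : ℂ)] fun z : ℂ => ‖z‖ ^ k}

/-- The D'Angelo type of `∂M_H` at `p`. -/
def dAngeloType (H : ℂ → ℝ) (p : ℂ × ℂ) : ℝ≥0∞ :=
  ⨆ (γ : ℂ → ℂ × ℂ) (_ : ∃ r > 0, DifferentiableOn ℂ γ (Metric.ball 0 r) ∧
      γ 0 = p ∧ ¬ ∀ z ∈ Metric.ball (0 : ℂ) r, γ z = p),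
    vOrder (fun t => ((γ t).2.re + H (γ t).1 : ℝ)) / vOrder (fun t => γ t - p)


private lemma choose_sub_mul' {n k : ℕ} (hn : 1 ≤ n) :
    (n - k) * n.choose k = n * (n - 1).choose k := by
  have h1 := Nat.choose_succ_right_eq n k
  have h2 := Nat.add_one_mul_choose_eq (n - 1) k
  have h3 : n - 1 + 1 = n := by omega
  simp only [Nat.succ_eq_add_one, h3] at h2
  rw [mul_comm, ← h1, ← h2]

private lemma trinom' {M j k : ℕ} (hjk : j ≤ k) (hkM : k ≤ M) :
    M.choose k * k.descFactorial j = M.descFactorial j * (M - j).choose (k - j) := by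
  have hjM : j ≤ M := hjk.trans hkM
  apply Nat.eq_of_mul_eq_mul_right
    (Nat.mul_pos (Nat.factorial_pos (k - j)) (Nat.factorial_pos (M - k)))
  have h1 : (k - j).factorial * k.descFactorial j = k.factorial :=
    Nat.factorial_mul_descFactorial hjk
  have h2 : (M - j).factorial * M.descFactorial j = M.factorial :=
    Nat.factorial_mul_descFactorial hjM
  have h3 : M.choose k * k.factorial * (M - k).factorial = M.factorial :=
    Nat.choose_mul_factorial_mul_factorial hkM
  have h5 : M - j - (k - j) = M - k := by omega
  have h4 : (M - j).choose (k - j) * (k - j).factorial * (M - k).factorial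
      = (M - j).factorial := by
    rw [← h5]; exact Nat.choose_mul_factorial_mul_factorial (by omega)
  calc M.choose k * k.descFactorial j * ((k - j).factorial * (M - k).factorial)
      = M.choose k * ((k - j).factorial * k.descFactorial j) * (M - k).factorial := by ring
    _ = M.choose k * k.factorial * (M - k).factorial := by rw [h1]
    _ = M.factorial := h3
    _ = (M - j).factorial * M.descFactorial j := h2.symm
    _ = ((M - j).choose (k - j) * (k - j).factorial * (M - k).factorial) * M.descFactorial j := by
        rw [h4]
    _ = M.descFactorial j * (M - j).choose (k - j) * ((k - j).factorial * (M - k).factorial) := by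
        ring

private lemma alt_sum' {N : ℕ} (hN : N ≠ 0) :
    ∑ i ∈ Finset.range (N + 1), (-1 : ℂ) ^ i * (N.choose i : ℂ) = 0 := by
  have h := Int.alternating_sum_range_choose_of_ne hN
  have h2 := congrArg (fun x : ℤ => (x : ℂ)) h
  push_cast at h2
  simpa using h2

private lemma sum_split' {M : Type*} [AddCommMonoid M] (f : ℕ → M) {N : ℕ} (hN : 1 ≤ N) :
    ∑ k ∈ Finset.range (N + 1), f k = f 0 + (∑ k ∈ Finset.Icc 1 (N - 1), f k) + f N := by
  rw [Finset.sum_range_succ, Finset.range_eq_Ico, Finset.sum_eq_sum_Ico_succ_bot (by omega)]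
  have h : Finset.Icc 1 (N - 1) = Finset.Ico 1 N := by
    rw [← Finset.Ico_add_one_right_eq_Icc]; congr 1; omega
  rw [h]

private lemma Ipow' {m j : ℕ} (hj : j ≤ 2 * m) :
    Complex.I ^ j * (-Complex.I) ^ (2 * m - j) * (-1 : ℂ) ^ m = (-1 : ℂ) ^ j := by
  have h1 : (-Complex.I) ^ (2 * m - j) = (-1 : ℂ) ^ (2 * m - j) * Complex.I ^ (2 * m - j) :=
    neg_pow _ _
  have h2 : Complex.I ^ j * Complex.I ^ (2 * m - j) = (-1 : ℂ) ^ m := by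
    rw [← pow_add, show j + (2 * m - j) = 2 * m by omega, pow_mul, Complex.I_sq]
  have h3 : (-1 : ℂ) ^ (2 * m - j) * (-1 : ℂ) ^ j = 1 := by
    rw [← pow_add, show 2 * m - j + j = 2 * m by omega, pow_mul]; norm_num
  have h4 : (-1 : ℂ) ^ m * (-1 : ℂ) ^ m = 1 := by
    rw [← pow_add, ← two_mul, pow_mul]; norm_num
  have h5 : (-1 : ℂ) ^ j * (-1 : ℂ) ^ j = 1 := by
    rw [← pow_add, ← two_mul, pow_mul]; norm_num
  calc Complex.I ^ j * (-Complex.I) ^ (2 * m - j) * (-1 : ℂ) ^ m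
      = (-1 : ℂ) ^ (2 * m - j) * (Complex.I ^ j * Complex.I ^ (2 * m - j)) * (-1 : ℂ) ^ m := by
        rw [h1]; ring
    _ = (-1 : ℂ) ^ (2 * m - j) * ((-1 : ℂ) ^ m * (-1 : ℂ) ^ m) := by rw [h2]; ring
    _ = (-1 : ℂ) ^ (2 * m - j) := by rw [h4, mul_one]
    _ = (-1 : ℂ) ^ (2 * m - j) * ((-1 : ℂ) ^ j * (-1 : ℂ) ^ j) := by rw [h5, mul_one]
    _ = ((-1 : ℂ) ^ (2 * m - j) * (-1 : ℂ) ^ j) * (-1 : ℂ) ^ j := by ring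
    _ = (-1 : ℂ) ^ j := by rw [h3, one_mul]

private lemma V_lemma' {n j : ℕ} (hn : 4 ≤ n) (hj1 : 1 ≤ j) (hj2 : j ≤ n - 2) :
    ∑ k ∈ Finset.Icc 1 (n - 1),
      (-1 : ℂ) ^ k * (n.choose k : ℂ) * ((n - k : ℕ) : ℂ) * (k.descFactorial j : ℂ) = 0 := by
  have hzero : ∀ k ∈ Finset.Icc 1 (n - 1), k ∉ Finset.Icc j (n - 1) →
      (-1 : ℂ) ^ k * (n.choose k : ℂ) * ((n - k : ℕ) : ℂ) * (k.descFactorial j : ℂ) = 0 := by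
    intro k hk hk'
    simp only [Finset.mem_Icc] at hk hk'
    have hkj : k < j := by omega
    rw [Nat.descFactorial_of_lt hkj]
    simp
  rw [← Finset.sum_subset (Finset.Icc_subset_Icc_left hj1) hzero]
  have hcongr : ∀ k ∈ Finset.Icc j (n - 1),
      (-1 : ℂ) ^ k * (n.choose k : ℂ) * ((n - k : ℕ) : ℂ) * (k.descFactorial j : ℂ)
      = ((n : ℂ) * ((n - 1).descFactorial j : ℂ)) *
        ((-1 : ℂ) ^ k * ((n - 1 - j).choose (k - j) : ℂ)) := by
    intro k hk
    simp only [Finset.mem_Icc] at hk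
    have e1 : (n - k) * (n.choose k * k.descFactorial j)
        = n * ((n - 1).descFactorial j * (n - 1 - j).choose (k - j)) := by
      calc (n - k) * (n.choose k * k.descFactorial j)
          = ((n - k) * n.choose k) * k.descFactorial j := by ring
        _ = (n * (n - 1).choose k) * k.descFactorial j := by rw [choose_sub_mul' (by omega)]
        _ = n * ((n - 1).choose k * k.descFactorial j) := by ring
        _ = n * ((n - 1).descFactorial j * (n - 1 - j).choose (k - j)) := by
            rw [trinom' hk.1 hk.2]
    have e2 := congrArg (fun x : ℕ => (x : ℂ)) e1
    push_cast at e2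
    linear_combination ((-1 : ℂ) ^ k) * e2
  rw [Finset.sum_congr rfl hcongr, ← Finset.mul_sum]
  have hIcc : Finset.Icc j (n - 1) = Finset.Ico j n := by
    rw [← Finset.Ico_add_one_right_eq_Icc]; congr 1; omega
  rw [hIcc, Finset.sum_Ico_eq_sum_range]
  have hNN : n - j = (n - 1 - j) + 1 := by omega
  have hterm : ∀ i, (-1 : ℂ) ^ (j + i) * ((n - 1 - j).choose (j + i - j) : ℂ)
      = (-1 : ℂ) ^ j * ((-1 : ℂ) ^ i * ((n - 1 - j).choose i : ℂ)) := by
    intro i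
    rw [show j + i - j = i by omega, pow_add]
    ring
  rw [Finset.sum_congr rfl (fun i _ => hterm i), ← Finset.mul_sum, hNN, alt_sum' (by omega)]
  simp

private lemma CL' {n : ℕ} (hn : 4 ≤ n) (hev : Even n) (w : ℕ → ℂ)
    (hS : ∀ j, 1 ≤ j → j ≤ n - 2 →
      ∑ k ∈ Finset.Icc 1 (n - 1), w k * (k.descFactorial j : ℂ) = 0) :
    ∀ k ∈ Finset.Icc 1 (n - 1),
      (n : ℂ) * w k = -(w (n - 1)) * (-1 : ℂ) ^ k * (n.choose k : ℂ) * ((n - k : ℕ) : ℂ) := by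
  set d : ℕ → ℂ := fun k =>
    (n : ℂ) * w k + w (n - 1) * ((-1 : ℂ) ^ k * (n.choose k : ℂ) * ((n - k : ℕ) : ℂ)) with hd
  have hdS : ∀ j, 1 ≤ j → j ≤ n - 2 →
      ∑ k ∈ Finset.Icc 1 (n - 1), d k * (k.descFactorial j : ℂ) = 0 := by
    intro j h1 h2
    have hV := V_lemma' hn h1 h2
    have h0 := hS j h1 h2
    have hpt : ∀ k, d k * (k.descFactorial j : ℂ)
        = (n : ℂ) * (w k * (k.descFactorial j : ℂ)) +
          w (n - 1) * ((-1 : ℂ) ^ k * (n.choose k : ℂ) * ((n - k : ℕ) : ℂ) *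
            (k.descFactorial j : ℂ)) := by
      intro k; simp only [hd]; ring
    simp only [hpt]
    rw [Finset.sum_add_distrib, ← Finset.mul_sum, ← Finset.mul_sum, h0, hV, mul_zero, mul_zero,
      add_zero]
  have hodd : (-1 : ℂ) ^ (n - 1) = -1 := by
    have h' : (-1 : ℂ) ^ (n - 1) * (-1 : ℂ) ^ 1 = (-1 : ℂ) ^ n := by
      rw [← pow_add]; congr 1; omega
    have hn' : (-1 : ℂ) ^ n = 1 := hev.neg_one_pow
    rw [pow_one, hn'] at h'
    linear_combination -h'
  have hdn : d (n - 1) = 0 := by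
    simp only [hd]
    have h1 : n.choose (n - 1) = n := by
      rw [Nat.choose_symm (by omega : 1 ≤ n), Nat.choose_one_right]
    have h2 : n - (n - 1) = 1 := by omega
    rw [h1, h2, hodd]
    push_cast
    ring
  have key : ∀ t, ∀ k, k ∈ Finset.Icc 1 (n - 1) → n - 1 ≤ k + t → d k = 0 := by
    intro t
    induction t with
    | zero =>
      intro k hk hge
      simp only [Finset.mem_Icc] at hk
      have : k = n - 1 := by omega
      rw [this]; exact hdn
    | succ t ih =>
      intro k hk hge
      simp only [Finset.mem_Icc] at hk
      by_cases hcase : n - 1 ≤ k + t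
      · exact ih k (by simp only [Finset.mem_Icc]; omega) hcase
      · have hk2 : k ≤ n - 2 := by omega
        have heq := hdS k hk.1 hk2
        have hsingle : ∑ k' ∈ Finset.Icc 1 (n - 1), d k' * ((k'.descFactorial k : ℕ) : ℂ)
            = d k * ((k.descFactorial k : ℕ) : ℂ) := by
          apply Finset.sum_eq_single_of_mem k (by simp only [Finset.mem_Icc]; omega)
          intro b hb hbk
          simp only [Finset.mem_Icc] at hb
          rcases lt_or_gt_of_ne hbk with h | h
          · rw [Nat.descFactorial_of_lt h]; simp
          · rw [ih b (by simp only [Finset.mem_Icc]; omega) (by omega), zero_mul]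
        rw [hsingle] at heq
        have hne : ((k.descFactorial k : ℕ) : ℂ) ≠ 0 := by
          rw [Nat.descFactorial_self]
          exact Nat.cast_ne_zero.2 k.factorial_ne_zero
        exact (mul_eq_zero.1 heq).resolve_right hne
  intro k hk
  have hdk : d k = 0 := key (n - 1) k hk (by omega)
  simp only [hd] at hdk
  linear_combination hdk

/-- if all mixed derivatives `H_{j,q̄}` of total order `< 2m` vanish at some
`α ≠ 0`, then `H` has the special form
`a((2Re(e^{iν}z))^{2m} − 2Re((e^{iν}z)^{2m}))` with `Re(e^{iν}α) = 0`. -/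
theorem statement_7 (m : ℕ) (hm : 2 ≤ m) (a : ℕ → ℂ) (H : ℂ → ℝ)
    (hH : ∀ z : ℂ, (H z : ℂ) = Hpoly m a z)
    (hgood : GoodCoeff m a)
    (α : ℂ) (hα : α ≠ 0)
    (hvan : ∀ j q : ℕ, 1 ≤ j → 1 ≤ q → j + q < 2 * m → Hmix m a j q α = 0) :
    ∃ A : ℝ, A ≠ 0 ∧ ∃ ν : ℝ,
      (∀ z : ℂ, H z = A * ((2 * (Complex.exp (Complex.I * ν) * z).re) ^ (2 * m)
        - 2 * ((Complex.exp (Complex.I * ν) * z) ^ (2 * m)).re)) ∧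
      (Complex.exp (Complex.I * ν) * α).re = 0 := by
  have hαc : starRingEnd ℂ α ≠ 0 := by
    rw [starRingEnd_apply]; exact star_ne_zero.mpr hα
  set c : ℕ → ℂ := fun k => a (2 * m - k) * α ^ k * (starRingEnd ℂ α) ^ (2 * m - k) with hcdef
  set w : ℕ → ℂ := fun k => c k * ((2 * m - k : ℕ) : ℂ) with hwdef
  have hS : ∀ j, 1 ≤ j → j ≤ 2 * m - 2 →
      ∑ k ∈ Finset.Icc 1 (2 * m - 1), w k * (k.descFactorial j : ℂ) = 0 := by
    intro j hj1 hj2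
    have hv : Hmix m a j 1 α = 0 := hvan j 1 hj1 le_rfl (by omega)
    have hzero : ∀ k ∈ Finset.Icc 1 (2 * m - 1), k ∉ Finset.Icc j (2 * m - 1) →
        w k * (k.descFactorial j : ℂ) = 0 := by
      intro k hk hk'
      simp only [Finset.mem_Icc] at hk hk'
      rw [Nat.descFactorial_of_lt (show k < j by omega)]
      simp
    rw [← Finset.sum_subset (Finset.Icc_subset_Icc_left hj1) hzero]
    have hfil : (Finset.Icc j (2 * m - 1)).filter (fun k => 1 ≤ 2 * m - k)
        = Finset.Icc j (2 * m - 1) :=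
      Finset.filter_true_of_mem (fun k hk => by simp only [Finset.mem_Icc] at hk; omega)
    have hstep : ∑ k ∈ Finset.Icc j (2 * m - 1), w k * (k.descFactorial j : ℂ)
        = Hmix m a j 1 α * (α ^ j * starRingEnd ℂ α) := by
      simp only [Hmix]
      rw [hfil, Finset.sum_mul]
      apply Finset.sum_congr rfl
      intro k hk
      simp only [Finset.mem_Icc] at hk
      simp only [hwdef, hcdef, Nat.descFactorial_one]
      have e1 : α ^ (k - j) * α ^ j = α ^ k := by rw [← pow_add]; congr 1; omega
      have e2 : (starRingEnd ℂ α) ^ (2 * m - k - 1) * starRingEnd ℂ α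
          = (starRingEnd ℂ α) ^ (2 * m - k) := by
        rw [← pow_succ]; congr 1; omega
      calc a (2 * m - k) * α ^ k * (starRingEnd ℂ α) ^ (2 * m - k) * ((2 * m - k : ℕ) : ℂ) *
            ((k.descFactorial j : ℕ) : ℂ)
          = a (2 * m - k) * ((k.descFactorial j : ℕ) : ℂ) * ((2 * m - k : ℕ) : ℂ) *
            (α ^ (k - j) * α ^ j) *
            ((starRingEnd ℂ α) ^ (2 * m - k - 1) * starRingEnd ℂ α) := by rw [e1, e2]; ring
        _ = a (2 * m - k) * ((k.descFactorial j : ℕ) : ℂ) * ((2 * m - k : ℕ) : ℂ) * α ^ (k - j) *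
            (starRingEnd ℂ α) ^ (2 * m - k - 1) * (α ^ j * starRingEnd ℂ α) := by ring
    rw [hstep, hv, zero_mul]
  have hCL := CL' (show 4 ≤ 2 * m by omega) (even_two_mul m) w hS
  have h2m : ((2 * m : ℕ) : ℂ) ≠ 0 := Nat.cast_ne_zero.2 (by omega)
  set B : ℂ := -(c (2 * m - 1)) / ((2 * m : ℕ) : ℂ) with hBdef
  have hck : ∀ k, 1 ≤ k → k ≤ 2 * m - 1 →
      c k = B * (-1 : ℂ) ^ k * ((2 * m).choose k : ℂ) := by
    intro k h1 h2
    have h := hCL k (by simp only [Finset.mem_Icc]; omega)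
    have hw1 : w (2 * m - 1) = c (2 * m - 1) := by
      simp only [hwdef]
      rw [show 2 * m - (2 * m - 1) = 1 by omega]
      simp
    rw [hw1] at h
    simp only [hwdef] at h
    have hnk : ((2 * m - k : ℕ) : ℂ) ≠ 0 := Nat.cast_ne_zero.2 (by omega)
    have h' : ((2 * m : ℕ) : ℂ) * c k
        = -(c (2 * m - 1)) * (-1 : ℂ) ^ k * ((2 * m).choose k : ℂ) := by
      apply mul_right_cancel₀ hnk
      linear_combination h
    rw [hBdef, div_mul_eq_mul_div, div_mul_eq_mul_div, eq_div_iff h2m]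
    linear_combination h'
  have hodd2m : (-1 : ℂ) ^ (2 * m - 1) = -1 := by
    have h' : (-1 : ℂ) ^ (2 * m - 1) * (-1 : ℂ) ^ 1 = (-1 : ℂ) ^ (2 * m) := by
      rw [← pow_add]; congr 1; omega
    have hn' : (-1 : ℂ) ^ (2 * m) = 1 := by rw [pow_mul]; norm_num
    rw [pow_one, hn'] at h'
    linear_combination -h'
  have hcc : starRingEnd ℂ (c 1) = c (2 * m - 1) := by
    simp only [hcdef]
    rw [show 2 * m - (2 * m - 1) = 1 by omega]
    simp only [map_mul, map_pow, Complex.conj_conj]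
    have h := hgood.1 1 (by simp only [Finset.mem_Icc]; omega)
    rw [← h]
    ring
  have hBconj : starRingEnd ℂ B = B := by
    have h1 := hck 1 le_rfl (by omega)
    have h2 := hck (2 * m - 1) (by omega) le_rfl
    have h3 := hcc
    rw [h1, h2, Nat.choose_one_right] at h3
    rw [show (2 * m).choose (2 * m - 1) = 2 * m from by
      rw [Nat.choose_symm (by omega : 1 ≤ 2 * m), Nat.choose_one_right]] at h3
    rw [hodd2m, pow_one] at h3
    simp only [map_mul, map_neg, map_one, map_natCast] at h3
    have h4 := mul_right_cancel₀ h2m h3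
    exact mul_right_cancel₀ (show (-1 : ℂ) ≠ 0 by norm_num) h4
  have hBne : B ≠ 0 := by
    intro h0
    obtain ⟨j, hj, haj⟩ := hgood.2
    simp only [Finset.mem_Icc] at hj
    have h := hck (2 * m - j) (by omega) (by omega)
    rw [h0, zero_mul, zero_mul] at h
    simp only [hcdef] at h
    rw [show 2 * m - (2 * m - j) = j by omega] at h
    rcases mul_eq_zero.1 h with h' | h'
    · rcases mul_eq_zero.1 h' with h'' | h''
      · exact haj h''
      · exact pow_ne_zero _ hα h''
    · exact pow_ne_zero _ hαc h'
  have hBre : ((B.re : ℝ) : ℂ) = B := Complex.conj_eq_iff_re.1 hBconj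
  have hBrene : B.re ≠ 0 := by
    intro h
    exact hBne (by rw [← hBre, h, Complex.ofReal_zero])
  set r : ℝ := ‖α‖ with hr
  have hr0 : 0 < r := by rw [hr]; exact norm_pos_iff.mpr hα
  have hrne : (r : ℂ) ≠ 0 := Complex.ofReal_ne_zero.2 hr0.ne'
  set ν : ℝ := (Complex.I * starRingEnd ℂ α).arg with hν
  have habs : ‖Complex.I * starRingEnd ℂ α‖ = r := by
    rw [norm_mul, Complex.norm_I, Complex.norm_conj, one_mul, hr]
  have hexp : Complex.exp (Complex.I * (ν : ℂ)) = Complex.I * starRingEnd ℂ α / (r : ℂ) := by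
    have h := Complex.norm_mul_exp_arg_mul_I (Complex.I * starRingEnd ℂ α)
    rw [habs, ← hν] at h
    rw [mul_comm Complex.I ((ν : ℝ) : ℂ), eq_div_iff hrne, mul_comm]
    exact h
  have hns : (starRingEnd ℂ α) * α = (r : ℂ) * (r : ℂ) := by
    have h1 : Complex.normSq α = r * r := by rw [Complex.normSq_eq_norm_sq, ← hr]; ring
    calc (starRingEnd ℂ α) * α = α * starRingEnd ℂ α := mul_comm _ _
      _ = ((Complex.normSq α : ℝ) : ℂ) := Complex.mul_conj α
      _ = (r : ℂ) * (r : ℂ) := by rw [h1]; push_cast; ring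
  have hlamal : Complex.exp (Complex.I * (ν : ℂ)) * α = Complex.I * (r : ℂ) := by
    rw [hexp, div_mul_eq_mul_div, mul_assoc, hns, div_eq_iff hrne]
    ring
  have hre : (Complex.exp (Complex.I * (ν : ℂ)) * α).re = 0 := by
    rw [hlamal]; simp
  have hμ : starRingEnd ℂ (Complex.exp (Complex.I * (ν : ℂ))) * starRingEnd ℂ α
      = -Complex.I * (r : ℂ) := by
    rw [← map_mul, hlamal, map_mul, Complex.conj_I, Complex.conj_ofReal]
  set A : ℝ := ((-1 : ℝ) ^ m * B.re) / r ^ (2 * m) with hAdef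
  have hAne : A ≠ 0 := by
    rw [hAdef]
    exact div_ne_zero (mul_ne_zero (pow_ne_zero _ (by norm_num)) hBrene)
      (pow_ne_zero _ hr0.ne')
  have hAr : ((A : ℝ) : ℂ) * ((r : ℝ) : ℂ) ^ (2 * m) = (-1 : ℂ) ^ m * B := by
    rw [hAdef]
    push_cast
    rw [hBre, div_mul_cancel₀]
    exact pow_ne_zero _ hrne
  refine ⟨A, hAne, ν, ?_, hre⟩
  intro z
  apply Complex.ofReal_injective
  rw [hH z]
  simp only [Hpoly]
  push_cast
  rw [Complex.re_eq_add_conj, Complex.re_eq_add_conj]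
  trans ((A : ℂ) * ∑ j ∈ Finset.Icc 1 (2 * m - 1),
      (Complex.exp (Complex.I * (ν : ℂ)) * z) ^ j *
        (starRingEnd ℂ (Complex.exp (Complex.I * (ν : ℂ)) * z)) ^ (2 * m - j) *
        ((2 * m).choose j : ℂ))
  · rw [Finset.mul_sum]
    apply Finset.sum_congr rfl
    intro j hj
    simp only [Finset.mem_Icc] at hj
    have hckj := hck j hj.1 hj.2
    simp only [hcdef] at hckj
    have hanz : α ^ j * (starRingEnd ℂ α) ^ (2 * m - j) ≠ 0 :=
      mul_ne_zero (pow_ne_zero _ hα) (pow_ne_zero _ hαc)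
    have hacoef : a (2 * m - j)
        = (A : ℂ) * Complex.exp (Complex.I * (ν : ℂ)) ^ j *
          (starRingEnd ℂ (Complex.exp (Complex.I * (ν : ℂ)))) ^ (2 * m - j) *
          ((2 * m).choose j : ℂ) := by
      apply mul_right_cancel₀ hanz
      have e1 : Complex.exp (Complex.I * (ν : ℂ)) ^ j * α ^ j = (Complex.I * (r : ℂ)) ^ j := by
        rw [← mul_pow, hlamal]
      have e2 : (starRingEnd ℂ (Complex.exp (Complex.I * (ν : ℂ)))) ^ (2 * m - j) *
          (starRingEnd ℂ α) ^ (2 * m - j) = (-Complex.I * (r : ℂ)) ^ (2 * m - j) := by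
        rw [← mul_pow, hμ]
      have e3 : ((r : ℝ) : ℂ) ^ j * ((r : ℝ) : ℂ) ^ (2 * m - j) = ((r : ℝ) : ℂ) ^ (2 * m) := by
        rw [← pow_add]; congr 1; omega
      calc a (2 * m - j) * (α ^ j * (starRingEnd ℂ α) ^ (2 * m - j))
          = B * (-1 : ℂ) ^ j * ((2 * m).choose j : ℂ) := by linear_combination hckj
        _ = ((-1 : ℂ) ^ m * B) * (Complex.I ^ j * (-Complex.I) ^ (2 * m - j)) *
            ((2 * m).choose j : ℂ) := by
            linear_combination (-(B * (((2 * m).choose j : ℕ) : ℂ))) *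
              Ipow' (show j ≤ 2 * m by omega)
        _ = (((A : ℝ) : ℂ) * ((r : ℝ) : ℂ) ^ (2 * m)) *
            (Complex.I ^ j * (-Complex.I) ^ (2 * m - j)) * ((2 * m).choose j : ℂ) := by
            rw [hAr]
        _ = ((A : ℝ) : ℂ) * ((2 * m).choose j : ℂ) *
            ((Complex.I * ((r : ℝ) : ℂ)) ^ j * ((-Complex.I) * ((r : ℝ) : ℂ)) ^ (2 * m - j)) := by
            rw [mul_pow, mul_pow, ← e3]; ring
        _ = ((A : ℂ) * Complex.exp (Complex.I * (ν : ℂ)) ^ j *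
            (starRingEnd ℂ (Complex.exp (Complex.I * (ν : ℂ)))) ^ (2 * m - j) *
            ((2 * m).choose j : ℂ)) * (α ^ j * (starRingEnd ℂ α) ^ (2 * m - j)) := by
            rw [← e1, ← e2]; ring
    rw [hacoef]
    simp only [map_mul, mul_pow]
    ring
  · congr 1
    rw [map_pow]
    rw [show (2 : ℂ) * ((Complex.exp (Complex.I * (ν : ℂ)) * z +
        starRingEnd ℂ (Complex.exp (Complex.I * (ν : ℂ)) * z)) / 2)
        = Complex.exp (Complex.I * (ν : ℂ)) * z +
          starRingEnd ℂ (Complex.exp (Complex.I * (ν : ℂ)) * z) from by ring]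
    rw [add_pow]
    rw [sum_split' (fun k => (Complex.exp (Complex.I * (ν : ℂ)) * z) ^ k *
        (starRingEnd ℂ (Complex.exp (Complex.I * (ν : ℂ)) * z)) ^ (2 * m - k) *
        ((2 * m).choose k : ℂ)) (show 1 ≤ 2 * m by omega)]
    simp only [pow_zero, one_mul, Nat.sub_zero, Nat.choose_zero_right, Nat.cast_one, mul_one,
      Nat.sub_self, Nat.choose_self]
    ring


end
end

section
/- Let m ≥ 2 be an integer, let H be a real-valued homogeneous polynomial of degree 2m containing no harmonic terms, let β ∈ ℝ∖{0} and ν ∈ ℝ, and suppose that H_{1,1̄}(z) = β (Re(e^{iν}z))^{2m−2} for all z ∈ ℂ. Then there exists a ∈ ℝ∖{0} such that H(z) = a((2Re(e^{iν}z))^{2m} − 2Re((e^{iν}z)^{2m})) for all z ∈ ℂ. -/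
open Complex Finset Metric Filter Topology Asymptotics
open scoped ENNReal NNReal

noncomputable section

private lemma aux_coeff_zero (n : ℕ) (c : ℕ → ℂ)
    (h : ∀ z : ℂ, ∑ j ∈ Finset.range (n + 1), c j * z ^ j * (starRingEnd ℂ z) ^ (n - j) = 0) :
    ∀ j ∈ Finset.range (n + 1), c j = 0 := by
  set P : Polynomial ℂ := ∑ j ∈ Finset.range (n + 1), Polynomial.C (c j) * Polynomial.X ^ (2 * j)
    with hP
  have hroot : ∀ t : ℝ, P.IsRoot (Complex.exp ((t : ℂ) * Complex.I)) := by
    intro t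
    set z := Complex.exp ((t : ℂ) * Complex.I) with hzdef
    have hz : z * starRingEnd ℂ z = 1 := by
      rw [Complex.mul_conj]
      norm_cast
      simp [hzdef, Complex.normSq_eq_norm_sq]
    have key : P.eval z = z ^ n * ∑ j ∈ Finset.range (n + 1),
        c j * z ^ j * (starRingEnd ℂ z) ^ (n - j) := by
      rw [hP, Polynomial.eval_finset_sum, Finset.mul_sum]
      refine Finset.sum_congr rfl fun j hj => ?_
      have hj' : j ≤ n := Nat.lt_succ_iff.mp (Finset.mem_range.mp hj)
      have h1 : z ^ n = z ^ j * z ^ (n - j) := by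
        rw [← pow_add]; congr 1; omega
      have h2 : z ^ (n - j) * (starRingEnd ℂ z) ^ (n - j) = 1 := by
        rw [← mul_pow, hz, one_pow]
      calc Polynomial.eval z (Polynomial.C (c j) * Polynomial.X ^ (2 * j))
          = c j * z ^ (2 * j) := by simp
        _ = c j * (z ^ j * z ^ j) := by rw [two_mul, pow_add]
        _ = c j * (z ^ j * z ^ j) * (z ^ (n - j) * (starRingEnd ℂ z) ^ (n - j)) := by
            rw [h2, mul_one]
        _ = z ^ n * (c j * z ^ j * (starRingEnd ℂ z) ^ (n - j)) := by rw [h1]; ring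
    simp [Polynomial.IsRoot, key, h z]
  have hP0 : P = 0 := by
    apply Polynomial.eq_zero_of_infinite_isRoot
    have hinj : Set.InjOn (fun t : ℝ => Complex.exp ((t : ℂ) * Complex.I)) (Set.Icc 0 1) := by
      intro x hx y hy hxy
      have hre : Real.cos x = Real.cos y := by
        have := congrArg Complex.re hxy
        simpa [Complex.exp_ofReal_mul_I_re] using this
      have hpi : (1:ℝ) ≤ Real.pi := by linarith [Real.pi_gt_three]
      exact Real.injOn_cos ⟨hx.1, le_trans hx.2 hpi⟩ ⟨hy.1, le_trans hy.2 hpi⟩ hre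
    have himg : ((fun t : ℝ => Complex.exp ((t : ℂ) * Complex.I)) '' Set.Icc 0 1).Infinite :=
      Set.Infinite.image hinj (Set.Icc_infinite (by norm_num : (0:ℝ) < 1))
    refine himg.mono ?_
    rintro w ⟨t, -, rfl⟩
    exact hroot t
  intro j hj
  have hc := congrArg (fun p : Polynomial ℂ => p.coeff (2 * j)) hP0
  simp only [hP, Polynomial.finset_sum_coeff, Polynomial.coeff_C_mul, Polynomial.coeff_X_pow,
    Polynomial.coeff_zero] at hc
  rw [Finset.sum_eq_single j] at hc
  · simpa using hc
  · intro b _ hbj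
    have : ¬ (2 * j = 2 * b) := by omega
    simp [this]
  · intro hjn
    exact (hjn hj).elim

private lemma aux_choose (m k : ℕ) (hk : 1 ≤ k) (hk2 : k ≤ 2 * m - 1) :
    k * (2 * m - k) * Nat.choose (2 * m) k
      = 2 * m * (2 * m - 1) * Nat.choose (2 * m - 2) (k - 1) := by
  obtain ⟨k', rfl⟩ : ∃ k', k = k' + 1 := ⟨k - 1, by omega⟩
  obtain ⟨d, hd⟩ : ∃ d, 2 * m = k' + 1 + (d + 1) := ⟨2 * m - k' - 2, by omega⟩
  rw [hd]
  have e1 : k' + 1 + (d + 1) - (k' + 1) = d + 1 := by omega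
  have e2 : k' + 1 + (d + 1) - 1 = k' + d + 1 := by omega
  have e3 : k' + 1 + (d + 1) - 2 = k' + d := by omega
  rw [e1, e2, e3, Nat.add_sub_cancel]
  have H1 := Nat.choose_mul_factorial_mul_factorial (show k' + 1 ≤ k' + 1 + (d + 1) by omega)
  rw [e1] at H1
  have H2 := Nat.choose_mul_factorial_mul_factorial (show k' ≤ k' + d by omega)
  rw [Nat.add_sub_cancel_left] at H2
  apply Nat.eq_of_mul_eq_mul_right (Nat.mul_pos (Nat.factorial_pos k') (Nat.factorial_pos d))
  calc (k'+1)*(d+1)*Nat.choose (k'+1+(d+1)) (k'+1) * (k'.factorial * d.factorial)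
      = Nat.choose (k'+1+(d+1)) (k'+1) * ((k'+1) * k'.factorial) * ((d+1) * d.factorial) := by ring
    _ = Nat.choose (k'+1+(d+1)) (k'+1) * (k'+1).factorial * (d+1).factorial := by
        rw [Nat.factorial_succ, Nat.factorial_succ]
    _ = (k'+1+(d+1)).factorial := H1
    _ = (k'+1+(d+1)) * ((k'+d+1) * (k'+d).factorial) := by
        rw [show k'+1+(d+1) = (k'+d+1)+1 by omega, Nat.factorial_succ]
        rw [show k'+d+1 = (k'+d)+1 from rfl, Nat.factorial_succ]
    _ = (k'+1+(d+1)) * (k'+d+1) * (Nat.choose (k'+d) k' * k'.factorial * d.factorial) := by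
        rw [H2]; ring
    _ = (k'+1+(d+1)) * (k'+d+1) * Nat.choose (k'+d) k' * (k'.factorial * d.factorial) := by ring

/-- if `H_{1,1̄}(z) = β (Re(e^{iν}z))^{2m−2}` with `β ≠ 0`, then `H` has the
special form `a((2Re(e^{iν}z))^{2m} − 2Re((e^{iν}z)^{2m}))`. -/
theorem statement_9 (m : ℕ) (hm : 2 ≤ m) (a : ℕ → ℂ) (H : ℂ → ℝ)
    (hH : ∀ z : ℂ, (H z : ℂ) = Hpoly m a z)
    (hgood : GoodCoeff m a)
    (β : ℝ) (hβ : β ≠ 0) (ν : ℝ)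
    (h11 : ∀ z : ℂ, Hmix m a 1 1 z =
      ((β : ℂ)) * (((Complex.exp (Complex.I * ν) * z).re : ℝ) : ℂ) ^ (2 * m - 2)) :
    ∃ A : ℝ, A ≠ 0 ∧ ∀ z : ℂ,
      H z = A * ((2 * (Complex.exp (Complex.I * ν) * z).re) ^ (2 * m)
        - 2 * ((Complex.exp (Complex.I * ν) * z) ^ (2 * m)).re) := by
  classical
  set E := Complex.exp (Complex.I * ν) with hE
  set F := starRingEnd ℂ E with hF
  have hEF : E * F = 1 := by
    rw [hF, hE, ← Complex.exp_conj, ← Complex.exp_add]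
    have : Complex.I * (ν : ℂ) + starRingEnd ℂ (Complex.I * (ν : ℂ)) = 0 := by
      rw [map_mul, Complex.conj_I, Complex.conj_ofReal]
      ring
    rw [this, Complex.exp_zero]
  -- Step 1: reindexed form of h11
  have h11' : ∀ z : ℂ,
      ∑ j ∈ Finset.range (2*m-1),
        ((((j+1 : ℕ) : ℂ) * ((2*m-(j+1) : ℕ) : ℂ) * a (2*m-(j+1))
          - ((β:ℂ) / 2 ^ (2*m-2)) * (Nat.choose (2*m-2) j : ℂ) * E ^ j * F ^ (2*m-2-j)))
          * z ^ j * (starRingEnd ℂ z) ^ (2*m-2-j) = 0 := by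
    intro z
    have hL : Hmix m a 1 1 z = ∑ j ∈ Finset.range (2*m-1),
        ((j+1:ℕ):ℂ) * ((2*m-(j+1):ℕ):ℂ) * a (2*m-(j+1)) * z ^ j
          * (starRingEnd ℂ z) ^ (2*m-2-j) := by
      rw [Hmix]
      rw [Finset.filter_true_of_mem (fun k hk => by
        simp only [Finset.mem_Icc] at hk; omega)]
      rw [show Finset.Icc 1 (2*m-1) = Finset.Ico 1 (2*m) from by
        ext x; simp only [Finset.mem_Icc, Finset.mem_Ico]; omega]
      rw [Finset.sum_Ico_eq_sum_range]
      rw [show 2*m-1 = 2*m-1 from rfl]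
      refine Finset.sum_congr rfl fun j hj => ?_
      simp only [Finset.mem_range] at hj
      rw [show 1 + j - 1 = j by omega, show 2*m-(1+j)-1 = 2*m-2-j by omega,
        show 1 + j = j + 1 by omega]
      rw [Nat.descFactorial_one, Nat.descFactorial_one]
      ring
    have hR : ((β:ℂ)) * ((((E * z).re : ℝ)):ℂ) ^ (2*m-2)
        = ∑ j ∈ Finset.range (2*m-1),
            ((β:ℂ) / 2 ^ (2*m-2)) * (Nat.choose (2*m-2) j : ℂ) * E ^ j * F ^ (2*m-2-j)
              * z ^ j * (starRingEnd ℂ z) ^ (2*m-2-j) := by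
      have hw : (((E*z).re : ℝ) : ℂ) = (E*z + starRingEnd ℂ (E*z)) / 2 := by
        rw [Complex.add_conj]; push_cast; ring
      rw [hw, div_pow, add_pow]
      rw [show 2*m-2+1 = 2*m-1 from by omega]
      rw [Finset.sum_div, Finset.mul_sum]
      refine Finset.sum_congr rfl fun j hj => ?_
      rw [map_mul, ← hF, mul_pow, mul_pow]
      have h2 : ((2:ℂ) ^ (2*m-2)) ≠ 0 := pow_ne_zero _ two_ne_zero
      field_simp
    have h0 := h11 z
    rw [hL, hR] at h0
    calc ∑ j ∈ Finset.range (2*m-1),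
        ((((j+1 : ℕ) : ℂ) * ((2*m-(j+1) : ℕ) : ℂ) * a (2*m-(j+1))
          - ((β:ℂ) / 2 ^ (2*m-2)) * (Nat.choose (2*m-2) j : ℂ) * E ^ j * F ^ (2*m-2-j)))
          * z ^ j * (starRingEnd ℂ z) ^ (2*m-2-j)
        = (∑ j ∈ Finset.range (2*m-1),
            ((j+1:ℕ):ℂ) * ((2*m-(j+1):ℕ):ℂ) * a (2*m-(j+1)) * z ^ j
              * (starRingEnd ℂ z) ^ (2*m-2-j))
          - ∑ j ∈ Finset.range (2*m-1),
            ((β:ℂ) / 2 ^ (2*m-2)) * (Nat.choose (2*m-2) j : ℂ) * E ^ j * F ^ (2*m-2-j)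
              * z ^ j * (starRingEnd ℂ z) ^ (2*m-2-j) := by
          rw [← Finset.sum_sub_distrib]
          exact Finset.sum_congr rfl fun j _ => by ring
      _ = 0 := by rw [h0]; ring
  have hcz := aux_coeff_zero (2*m-2) _ (fun z => by
    rw [show 2*m-2+1 = 2*m-1 from by omega]; exact h11' z)
  -- Step 2: coefficient formula
  set Dr : ℝ := 2 ^ (2*m-2) * ((2*m : ℕ) : ℝ) * ((2*m-1 : ℕ) : ℝ) with hDr
  have hDpos : 0 < Dr := by
    apply mul_pos (mul_pos (by positivity) _)
    · exact_mod_cast Nat.pos_of_ne_zero (by omega)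
    · exact_mod_cast Nat.pos_of_ne_zero (by omega)
  set A : ℝ := β / Dr with hA
  have hAne : A ≠ 0 := div_ne_zero hβ (ne_of_gt hDpos)
  have hAc : (A : ℂ) = (β : ℂ) / (2 ^ (2*m-2) * ((2*m:ℕ):ℂ) * ((2*m-1:ℕ):ℂ)) := by
    rw [hA, hDr]; push_cast; ring
  have hcoef : ∀ k, 1 ≤ k → k ≤ 2*m-1 →
      a (2*m-k) = (A : ℂ) * (Nat.choose (2*m) k : ℂ) * E ^ k * F ^ (2*m-k) := by
    intro k hk1 hk2
    have hmem : k - 1 ∈ Finset.range (2*m-2+1) := Finset.mem_range.mpr (by omega)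
    have h0 := hcz (k-1) hmem
    rw [show k - 1 + 1 = k by omega, show 2*m-2-(k-1) = 2*m-1-k by omega] at h0
    have h0' : ((k:ℕ):ℂ) * ((2*m-k:ℕ):ℂ) * a (2*m-k)
        = ((β:ℂ) / 2 ^ (2*m-2)) * (Nat.choose (2*m-2) (k-1) : ℂ) * E ^ (k-1) * F ^ (2*m-1-k) :=
      sub_eq_zero.mp h0
    have hkne : ((k:ℕ):ℂ) ≠ 0 := Nat.cast_ne_zero.mpr (by omega)
    have hmkne : ((2*m-k:ℕ):ℂ) ≠ 0 := Nat.cast_ne_zero.mpr (by omega)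
    have hEsplit : E ^ k = E ^ (k-1) * E := by
      conv_lhs => rw [show k = k - 1 + 1 by omega]
      rw [pow_succ]
    have hFsplit : F ^ (2*m-k) = F ^ (2*m-1-k) * F := by
      conv_lhs => rw [show 2*m-k = (2*m-1-k) + 1 by omega]
      rw [pow_succ]
    have hnatC : ((k:ℕ):ℂ) * ((2*m-k:ℕ):ℂ) * (Nat.choose (2*m) k : ℂ)
        = ((2*m:ℕ):ℂ) * ((2*m-1:ℕ):ℂ) * (Nat.choose (2*m-2) (k-1) : ℂ) := by
      exact_mod_cast congrArg (fun x : ℕ => (x : ℂ)) (aux_choose m k hk1 hk2)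
    have hMne : ((2*m:ℕ):ℂ) ≠ 0 := Nat.cast_ne_zero.mpr (by omega)
    have hM1ne : ((2*m-1:ℕ):ℂ) ≠ 0 := Nat.cast_ne_zero.mpr (by omega)
    have hAD : (A:ℂ) * (((2*m:ℕ):ℂ) * ((2*m-1:ℕ):ℂ)) = (β:ℂ) / 2 ^ (2*m-2) := by
      rw [hAc]
      have h2 : ((2:ℂ) ^ (2*m-2)) ≠ 0 := pow_ne_zero _ two_ne_zero
      have hM' : (2*(m:ℂ)) ≠ 0 := by
        have : ((2*m:ℕ):ℂ) = 2*(m:ℂ) := by push_cast; ring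
        rw [← this]; exact hMne
      have hM1' : (2*(m:ℂ)-1) ≠ 0 := by
        have : ((2*m-1:ℕ):ℂ) = 2*(m:ℂ)-1 := by
          push_cast [Nat.cast_sub (show 1 ≤ 2*m by omega)]; ring
        rw [← this]; exact hM1ne
      field_simp
    have goal2 : ((k:ℕ):ℂ) * ((2*m-k:ℕ):ℂ)
          * ((A:ℂ) * (Nat.choose (2*m) k : ℂ) * E ^ k * F ^ (2*m-k))
        = ((β:ℂ) / 2 ^ (2*m-2)) * (Nat.choose (2*m-2) (k-1) : ℂ) * E ^ (k-1) * F ^ (2*m-1-k) := by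
      calc ((k:ℕ):ℂ) * ((2*m-k:ℕ):ℂ)
            * ((A:ℂ) * (Nat.choose (2*m) k : ℂ) * E ^ k * F ^ (2*m-k))
          = (((k:ℕ):ℂ) * ((2*m-k:ℕ):ℂ) * (Nat.choose (2*m) k : ℂ))
              * ((A:ℂ) * (E ^ (k-1) * F ^ (2*m-1-k)) * (E * F)) := by
            rw [hEsplit, hFsplit]; ring
        _ = (((2*m:ℕ):ℂ) * ((2*m-1:ℕ):ℂ) * (Nat.choose (2*m-2) (k-1) : ℂ))
              * ((A:ℂ) * (E ^ (k-1) * F ^ (2*m-1-k)) * 1) := by rw [hnatC, hEF]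
        _ = ((A:ℂ) * (((2*m:ℕ):ℂ) * ((2*m-1:ℕ):ℂ))) * (Nat.choose (2*m-2) (k-1) : ℂ)
              * E ^ (k-1) * F ^ (2*m-1-k) := by ring
        _ = ((β:ℂ) / 2 ^ (2*m-2)) * (Nat.choose (2*m-2) (k-1) : ℂ)
              * E ^ (k-1) * F ^ (2*m-1-k) := by rw [hAD]
    apply mul_left_cancel₀ (mul_ne_zero hkne hmkne)
    calc ((k:ℕ):ℂ) * ((2*m-k:ℕ):ℂ) * a (2*m-k)
        = ((β:ℂ) / 2 ^ (2*m-2)) * (Nat.choose (2*m-2) (k-1) : ℂ) * E ^ (k-1) * F ^ (2*m-1-k) := h0'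
      _ = ((k:ℕ):ℂ) * ((2*m-k:ℕ):ℂ)
          * ((A:ℂ) * (Nat.choose (2*m) k : ℂ) * E ^ k * F ^ (2*m-k)) := goal2.symm
  -- Step 3: assemble
  refine ⟨A, hAne, fun z => ?_⟩
  set w := E * z with hw0
  have hbin : (w + starRingEnd ℂ w) ^ (2*m)
      = ∑ k ∈ Finset.range (2*m+1),
          w ^ k * (starRingEnd ℂ w) ^ (2*m-k) * (Nat.choose (2*m) k : ℂ) :=
    add_pow w (starRingEnd ℂ w) (2*m)
  have hset : Finset.range (2*m+1) = insert 0 (insert (2*m) (Finset.Icc 1 (2*m-1))) := by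
    ext x
    simp only [Finset.mem_range, Finset.mem_insert, Finset.mem_Icc]
    omega
  have e0 : (0:ℕ) ∉ insert (2*m) (Finset.Icc 1 (2*m-1)) := by
    simp only [Finset.mem_insert, Finset.mem_Icc]
    omega
  have e2m : 2*m ∉ Finset.Icc 1 (2*m-1) := by
    simp only [Finset.mem_Icc]
    omega
  have hbr : (w + starRingEnd ℂ w) ^ (2*m) - w ^ (2*m) - (starRingEnd ℂ w) ^ (2*m)
      = ∑ k ∈ Finset.Icc 1 (2*m-1),
          (Nat.choose (2*m) k : ℂ) * (w ^ k * (starRingEnd ℂ w) ^ (2*m-k)) := by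
    rw [hbin, hset, Finset.sum_insert e0, Finset.sum_insert e2m]
    have t0 : w ^ 0 * (starRingEnd ℂ w) ^ (2*m-0) * (Nat.choose (2*m) 0 : ℂ)
        = (starRingEnd ℂ w) ^ (2*m) := by simp
    have t2 : w ^ (2*m) * (starRingEnd ℂ w) ^ (2*m-2*m) * (Nat.choose (2*m) (2*m) : ℂ)
        = w ^ (2*m) := by simp
    rw [t0, t2]
    rw [Finset.sum_congr rfl (fun k _ =>
      (by ring : w ^ k * (starRingEnd ℂ w) ^ (2*m-k) * (Nat.choose (2*m) k : ℂ)
        = (Nat.choose (2*m) k : ℂ) * (w ^ k * (starRingEnd ℂ w) ^ (2*m-k))))]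
    ring
  have hsum : (H z : ℂ) = (A:ℂ) * ((w + starRingEnd ℂ w) ^ (2*m) - w ^ (2*m)
      - (starRingEnd ℂ w) ^ (2*m)) := by
    rw [hH z, Hpoly, hbr, Finset.mul_sum]
    refine Finset.sum_congr rfl fun k hk => ?_
    simp only [Finset.mem_Icc] at hk
    rw [hcoef k hk.1 hk.2, hw0, map_mul, ← hF, mul_pow, mul_pow]
    ring
  have hu : w^(2*m) + starRingEnd ℂ (w^(2*m)) = ((2 * (w^(2*m)).re : ℝ) : ℂ) :=
    Complex.add_conj _
  have hre1 : w + starRingEnd ℂ w = ((2 * w.re : ℝ) : ℂ) := Complex.add_conj w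
  have hfin : (H z : ℂ) = ((A * ((2*w.re)^(2*m) - 2 * (w^(2*m)).re) : ℝ) : ℂ) := by
    rw [hsum, hre1, show (starRingEnd ℂ w) ^ (2*m) = starRingEnd ℂ (w^(2*m)) from
      (map_pow _ _ _).symm]
    calc (A:ℂ) * (((2*w.re:ℝ):ℂ)^(2*m) - w^(2*m) - starRingEnd ℂ (w^(2*m)))
        = (A:ℂ) * (((2*w.re:ℝ):ℂ)^(2*m) - (w^(2*m) + starRingEnd ℂ (w^(2*m)))) := by ring
      _ = (A:ℂ) * (((2*w.re:ℝ):ℂ)^(2*m) - ((2 * (w^(2*m)).re : ℝ):ℂ)) := by rw [hu]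
      _ = ((A * ((2*w.re)^(2*m) - 2*(w^(2*m)).re) : ℝ) : ℂ) := by push_cast; ring
  exact_mod_cast hfin

end
end

section
/- Let m ≥ 1 be an integer, let H be a real-valued homogeneous polynomial of degree 2m containing no harmonic terms, and let L be the greatest common divisor of the numbers 2m − 2j over all indices 1 ≤ j ≤ m with a_j ≠ 0. Then for θ ∈ ℝ, H(e^{iθ}z) = H(z) for all z ∈ ℂ if and only if exp(iLθ) = 1. -/
open Complex Finset Metric Filter Topology Asymptotics
open scoped ENNReal NNReal

noncomputable section

private lemma aux_nat_gcd_pow (w : ℂ) (hw : w ≠ 0) (p q : ℕ)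
    (hp : w ^ p = 1) (hq : w ^ q = 1) : w ^ Nat.gcd p q = 1 := by
  have hzp : w ^ (p : ℤ) = 1 := by rw [zpow_natCast, hp]
  have hzq : w ^ (q : ℤ) = 1 := by rw [zpow_natCast, hq]
  calc w ^ Nat.gcd p q = w ^ ((Nat.gcd p q : ℤ)) := (zpow_natCast w _).symm
    _ = w ^ ((p : ℤ) * Nat.gcdA p q + (q : ℤ) * Nat.gcdB p q) := by
        rw [← Nat.gcd_eq_gcd_ab]
    _ = (w ^ (p : ℤ)) ^ Nat.gcdA p q * (w ^ (q : ℤ)) ^ Nat.gcdB p q := by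
        rw [zpow_add₀ hw, zpow_mul, zpow_mul]
    _ = 1 := by rw [hzp, hzq]; simp

private lemma aux_gcd_pow (w : ℂ) (hw : w ≠ 0) (s : Finset ℕ) (f : ℕ → ℕ)
    (h : ∀ i ∈ s, w ^ f i = 1) : w ^ s.gcd f = 1 := by
  classical
  induction s using Finset.induction_on with
  | empty => simp
  | @insert i s hi ih =>
    rw [Finset.gcd_insert]
    exact aux_nat_gcd_pow w hw _ _ (h i (Finset.mem_insert_self _ _))
      (ih fun j hj => h j (Finset.mem_insert_of_mem hj))

private lemma aux_zpow_dvd (w : ℂ) (hw : w ≠ 0) (L : ℤ) (hL : w ^ L = 1)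
    (d : ℤ) (hd : L ∣ d) : w ^ d = 1 := by
  obtain ⟨e, rfl⟩ := hd
  rw [zpow_mul, hL, one_zpow]


private lemma aux_vanish (m : ℕ) (c : ℕ → ℂ)
    (h : ∀ z : ℂ, ∑ j ∈ Finset.Icc 1 (2 * m - 1),
        c j * z ^ j * (starRingEnd ℂ z) ^ (2 * m - j) = 0) :
    ∀ j ∈ Finset.Icc 1 (2 * m - 1), c j = 0 := by
  classical
  set P : Polynomial ℂ :=
    ∑ j ∈ Finset.Icc 1 (2 * m - 1), Polynomial.C (c j) * Polynomial.X ^ j with hP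
  have heval : ∀ t : ℝ, P.eval (Complex.exp (2 * Complex.I * t)) = 0 := by
    intro t
    have hz := h (Complex.exp (Complex.I * t))
    have hconj : starRingEnd ℂ (Complex.exp (Complex.I * t))
        = Complex.exp (-(Complex.I * t)) := by
      rw [← Complex.exp_conj]; congr 1; simp
    rw [hP, Polynomial.eval_finset_sum]
    have hterm : ∀ j ∈ Finset.Icc 1 (2 * m - 1),
        (Polynomial.C (c j) * Polynomial.X ^ j).eval (Complex.exp (2 * Complex.I * t))
        = Complex.exp (Complex.I * t) ^ (2 * m) *
          (c j * Complex.exp (Complex.I * t) ^ j *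
            (starRingEnd ℂ (Complex.exp (Complex.I * t))) ^ (2 * m - j)) := by
      intro j hj
      have hj2 : j ≤ 2 * m := by
        have := (Finset.mem_Icc.mp hj).2; omega
      rw [hconj]
      simp only [Polynomial.eval_mul, Polynomial.eval_C, Polynomial.eval_pow,
        Polynomial.eval_X]
      rw [← Complex.exp_nat_mul, ← Complex.exp_nat_mul, ← Complex.exp_nat_mul,
        ← Complex.exp_nat_mul]
      rw [show Complex.exp ((2 * m : ℕ) * (Complex.I * t)) *
          (c j * Complex.exp ((j : ℂ) * (Complex.I * t)) *
            Complex.exp (((2 * m - j : ℕ) : ℂ) * -(Complex.I * t)))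
          = c j * Complex.exp (((2 * m : ℕ) : ℂ) * (Complex.I * t) + ((j : ℂ) * (Complex.I * t)
              + ((2 * m - j : ℕ) : ℂ) * -(Complex.I * t))) by
        rw [Complex.exp_add, Complex.exp_add]; ring]
      congr 2
      push_cast [hj2]
      ring
    rw [Finset.sum_congr rfl hterm, ← Finset.mul_sum, hz, mul_zero]
  have hroots : {x : ℂ | P.IsRoot x}.Infinite := by
    have hinj : Set.InjOn (fun t : ℝ => Complex.exp (2 * Complex.I * t)) (Set.Ioo 0 1) := by
      intro t ht s hs heq
      obtain ⟨n, hn⟩ := Complex.exp_eq_exp_iff_exists_int.mp heq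
      have him := congrArg Complex.im hn
      simp [Complex.mul_im, Complex.mul_re] at him
      have h1 : 2 * t = 2 * s + (n : ℝ) * (2 * Real.pi) := by linarith
      have hn0 : n = 0 := by
        by_contra hne
        have h1le : (1 : ℝ) ≤ |(n : ℝ)| := by
          rw [← Int.cast_abs]; exact_mod_cast Int.one_le_abs hne
        have hpi := Real.pi_gt_three
        have := ht.1; have := ht.2; have := hs.1; have := hs.2
        rcases abs_cases ((n : ℝ)) with ⟨he, _⟩ | ⟨he, _⟩ <;> nlinarith
      rw [hn0] at h1
      have : t = s := by push_cast at h1; linarith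
      exact this
    have himg := Set.Infinite.image hinj (Set.Ioo_infinite (by norm_num : (0:ℝ) < 1))
    refine himg.mono ?_
    rintro x ⟨t, _, rfl⟩
    exact heval t
  have hP0 : P = 0 := Polynomial.eq_zero_of_infinite_isRoot P hroots
  intro j hj
  have hcoeff : P.coeff j = c j := by
    rw [hP, Polynomial.finset_sum_coeff, Finset.sum_eq_single j]
    · simp [Polynomial.coeff_C_mul, Polynomial.coeff_X_pow]
    · intro k hk hkj
      simp [Polynomial.coeff_C_mul, Polynomial.coeff_X_pow, Ne.symm hkj]
    · intro hj'; exact absurd hj hj'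
  rw [← hcoeff, hP0, Polynomial.coeff_zero]

open scoped Classical in
/-- `H(e^{iθ}z) = H(z)` for all `z` iff `e^{iθ}` is an `L`-root of unity. -/
theorem statement_10 (m : ℕ) (hm : 1 ≤ m) (a : ℕ → ℂ) (H : ℂ → ℝ)
    (hH : ∀ z : ℂ, (H z : ℂ) = Hpoly m a z)
    (hgood : GoodCoeff m a) (θ : ℝ) :
    (∀ z : ℂ, H (Complex.exp (Complex.I * θ) * z) = H z) ↔
      Complex.exp (Complex.I * ((Finset.gcd
          ((Finset.Icc 1 m).filter fun j => a j ≠ 0) fun j => 2 * m - 2 * j : ℕ) : ℂ)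
        * (θ : ℂ)) = 1 := by
  classical
  set w : ℂ := Complex.exp (Complex.I * θ) with hw_def
  set L : ℕ := Finset.gcd ((Finset.Icc 1 m).filter fun j => a j ≠ 0)
    (fun j => 2 * m - 2 * j) with hL_def
  have hw : w ≠ 0 := Complex.exp_ne_zero _
  have hconj : starRingEnd ℂ w = w⁻¹ := by
    rw [hw_def, ← Complex.exp_conj, ← Complex.exp_neg]
    congr 1; simp
  have hgoal : Complex.I * (L : ℂ) * θ = (L : ℕ) * (Complex.I * θ) := by push_cast; ring
  have hww : ∀ j : ℕ, j ≤ 2 * m → w ^ j * (w⁻¹) ^ (2 * m - j)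
      = w ^ (2 * (j : ℤ) - 2 * m) := by
    intro j hj
    have h1 : (w⁻¹) ^ (2 * m - j) = w ^ (-(((2 * m - j : ℕ)) : ℤ)) := by
      rw [zpow_neg, zpow_natCast, inv_pow]
    rw [h1, ← zpow_natCast w j, ← zpow_add₀ hw]
    congr 1
    omega
  have hHw : ∀ z : ℂ, Hpoly m a (w * z) =
      ∑ j ∈ Finset.Icc 1 (2 * m - 1),
        a (2 * m - j) * w ^ (2 * (j : ℤ) - 2 * m) * z ^ j
          * (starRingEnd ℂ z) ^ (2 * m - j) := by
    intro z
    unfold Hpoly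
    refine Finset.sum_congr rfl fun j hj => ?_
    have hj2 : j ≤ 2 * m := by have := (Finset.mem_Icc.mp hj).2; omega
    rw [map_mul, hconj, mul_pow, mul_pow, ← hww j hj2]
    ring
  constructor
  · intro hinv
    have hcoef : ∀ j ∈ Finset.Icc 1 (2 * m - 1),
        a (2 * m - j) * (w ^ (2 * (j : ℤ) - 2 * m) - 1) = 0 := by
      apply aux_vanish
      intro z
      have h1 : Hpoly m a (w * z) = Hpoly m a z := by
        rw [← hH, ← hH, hinv z]
      rw [hHw] at h1
      unfold Hpoly at h1
      have h2 : ∑ j ∈ Finset.Icc 1 (2 * m - 1),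
          (a (2 * m - j) * w ^ (2 * (j : ℤ) - 2 * m) * z ^ j
              * (starRingEnd ℂ z) ^ (2 * m - j)
            - a (2 * m - j) * z ^ j * (starRingEnd ℂ z) ^ (2 * m - j)) = 0 := by
        rw [Finset.sum_sub_distrib, h1, sub_self]
      rw [← h2]
      exact Finset.sum_congr rfl fun j hj => by ring
    have hkey : ∀ j ∈ (Finset.Icc 1 m).filter (fun j => a j ≠ 0),
        w ^ (2 * m - 2 * j) = 1 := by
      intro j hj
      rw [Finset.mem_filter, Finset.mem_Icc] at hj
      obtain ⟨⟨hj1, hjm⟩, hja⟩ := hj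
      have hmem : 2 * m - j ∈ Finset.Icc 1 (2 * m - 1) := by
        rw [Finset.mem_Icc]; omega
      have hc := hcoef (2 * m - j) hmem
      have ha' : a (2 * m - (2 * m - j)) ≠ 0 := by
        rw [show 2 * m - (2 * m - j) = j by omega]; exact hja
      have hphi := sub_eq_zero.mp ((mul_eq_zero.mp hc).resolve_left ha')
      have hexp : 2 * (((2 * m - j : ℕ)) : ℤ) - 2 * m = ((2 * m - 2 * j : ℕ) : ℤ) := by
        omega
      rw [hexp, zpow_natCast] at hphi
      exact hphi
    rw [hgoal, Complex.exp_nat_mul]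
    exact aux_gcd_pow w hw _ _ hkey
  · intro hroot z
    rw [hgoal, Complex.exp_nat_mul] at hroot
    have hLpow : w ^ ((L : ℕ) : ℤ) = 1 := by rw [zpow_natCast]; exact hroot
    have hφ : ∀ j ∈ Finset.Icc 1 (2 * m - 1), a (2 * m - j) ≠ 0 →
        w ^ (2 * (j : ℤ) - 2 * m) = 1 := by
      intro j hj ha
      rw [Finset.mem_Icc] at hj
      refine aux_zpow_dvd w hw _ hLpow _ ?_
      rcases le_or_gt j m with hjm | hjm
      · have hk : j ∈ (Finset.Icc 1 m).filter (fun j => a j ≠ 0) := by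
          rw [Finset.mem_filter, Finset.mem_Icc]
          refine ⟨⟨hj.1, hjm⟩, ?_⟩
          rw [hgood.1 j (by rw [Finset.mem_Icc]; omega)]
          simpa using ha
        have hd : (L : ℤ) ∣ ((2 * m - 2 * j : ℕ) : ℤ) :=
          Int.natCast_dvd_natCast.mpr (Finset.gcd_dvd hk)
        have he : 2 * (j : ℤ) - 2 * m = -(((2 * m - 2 * j : ℕ)) : ℤ) := by omega
        rw [he]
        exact dvd_neg.mpr hd
      · have hk : 2 * m - j ∈ (Finset.Icc 1 m).filter (fun j => a j ≠ 0) := by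
          rw [Finset.mem_filter, Finset.mem_Icc]
          exact ⟨⟨by omega, by omega⟩, ha⟩
        have hd : (L : ℤ) ∣ ((2 * m - 2 * (2 * m - j) : ℕ) : ℤ) :=
          Int.natCast_dvd_natCast.mpr (Finset.gcd_dvd hk)
        have he : 2 * (j : ℤ) - 2 * m = ((2 * m - 2 * (2 * m - j) : ℕ) : ℤ) := by omega
        rw [he]
        exact hd
    have hfin : (H (w * z) : ℂ) = (H z : ℂ) := by
      rw [hH, hH, hHw]
      unfold Hpoly
      refine Finset.sum_congr rfl fun j hj => ?_
      by_cases ha : a (2 * m - j) = 0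
      · rw [ha]; ring
      · rw [hφ j hj ha, mul_one]
    exact_mod_cast hfin

end
end

section
/- Let m ≥ 1 be an integer, a > 0, ν ∈ ℝ, and let H(z) = a((2Re(e^{iν}z))^{2m} − 2Re((e^{iν}z)^{2m})) for z ∈ ℂ. Then H is a real-valued homogeneous polynomial of degree 2m containing no harmonic terms, and the map Φ(z₁,z₂) = (2a^{1/(2m)} e^{iν} z₁, z₂ − 2a(e^{iν}z₁)^{2m}) is a biholomorphism from M_H = {(z₁,z₂) ∈ ℂ² : Re z₂ + H(z₁) < 0} onto Ω_m = {(z₁,z₂) ∈ ℂ² : Re z₂ + (Re z₁)^{2m} < 0}. -/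
open Complex Finset Metric Filter Topology Asymptotics
open scoped ENNReal NNReal

noncomputable section

/-- `H(z) = a((2Re(e^{iν}z))^{2m} − 2Re((e^{iν}z)^{2m}))` is a real-valued
homogeneous polynomial of degree `2m` with no harmonic terms, and
`Φ(z₁,z₂) = (2a^{1/(2m)}e^{iν}z₁, z₂ − 2a(e^{iν}z₁)^{2m})` is a biholomorphism from `M_H`
onto `Ω_m`. -/
theorem statement_11 (m : ℕ) (hm : 1 ≤ m) (A : ℝ) (hA : 0 < A) (ν : ℝ)
    (H : ℂ → ℝ)
    (hHdef : ∀ z : ℂ, H z = A * ((2 * (Complex.exp (Complex.I * ν) * z).re) ^ (2 * m)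
      - 2 * ((Complex.exp (Complex.I * ν) * z) ^ (2 * m)).re)) :
    (∃ c : ℕ → ℂ, GoodCoeff m c ∧ ∀ z : ℂ, (H z : ℂ) = Hpoly m c z) ∧
    IsBiholoOn (modelM H) (OmegaM m)
      (fun z => (2 * ((A ^ ((1 : ℝ) / (2 * (m : ℝ))) : ℝ) : ℂ) *
          Complex.exp (Complex.I * ν) * z.1,
        z.2 - 2 * (A : ℂ) * (Complex.exp (Complex.I * ν) * z.1) ^ (2 * m))) := by
  have he0 : Complex.exp (Complex.I * ν) ≠ 0 := Complex.exp_ne_zero _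
  set e : ℂ := Complex.exp (Complex.I * ν) with he
  constructor
  · -- coefficients
    refine ⟨fun k => (A : ℂ) * ((2 * m).choose k : ℂ) * e ^ (2 * m - k) *
      (starRingEnd ℂ e) ^ k, ⟨?_, ?_⟩, ?_⟩
    · intro j hj
      simp only [Finset.mem_Icc] at hj
      have h1 : 2 * m - (2 * m - j) = j := by omega
      have h2 : (2 * m).choose (2 * m - j) = (2 * m).choose j := by
        exact Nat.choose_symm (by omega)
      simp only [map_mul, map_pow, Complex.conj_conj, Complex.conj_ofReal, map_natCast,
        h1, h2]
      ring
    · refine ⟨1, ?_, ?_⟩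
      · simp only [Finset.mem_Icc]; omega
      · have hc : ((2 * m).choose 1 : ℂ) ≠ 0 := by
          rw [Nat.choose_one_right]
          exact_mod_cast (by omega : 2 * m ≠ 0)
        have hA' : (A : ℂ) ≠ 0 := Complex.ofReal_ne_zero.mpr hA.ne'
        have hec : starRingEnd ℂ e ≠ 0 := star_ne_zero.mpr he0
        simp only [pow_one]
        exact mul_ne_zero (mul_ne_zero (mul_ne_zero hA' hc) (pow_ne_zero _ he0)) hec
    · intro z
      set w : ℂ := e * z with hw
      have hconjw : starRingEnd ℂ w = starRingEnd ℂ e * starRingEnd ℂ z := map_mul _ _ _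
      have hre1 : ((2 * w.re : ℝ) : ℂ) = w + starRingEnd ℂ w := by
        rw [Complex.add_conj]
      have hre2 : ((2 * ((w ^ (2 * m)).re) : ℝ) : ℂ)
          = w ^ (2 * m) + (starRingEnd ℂ w) ^ (2 * m) := by
        rw [← map_pow, Complex.add_conj]
      have hHc : (H z : ℂ) = (A : ℂ) * ((w + starRingEnd ℂ w) ^ (2 * m)
          - (w ^ (2 * m) + (starRingEnd ℂ w) ^ (2 * m))) := by
        rw [hHdef z]
        push_cast
        rw [show ((2 : ℂ) * (w.re : ℂ)) = ((2 * w.re : ℝ) : ℂ) by push_cast; ring, hre1,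
          show ((2 : ℂ) * (((w ^ (2 * m)).re : ℝ) : ℂ)) = ((2 * ((w ^ (2 * m)).re) : ℝ) : ℂ)
            by push_cast; ring, hre2]
        try ring
      rw [hHc]
      -- binomial expansion
      set cw : ℂ := starRingEnd ℂ w with hcw
      have hbin : (w + cw) ^ (2 * m)
          = w ^ (2 * m) + cw ^ (2 * m)
            + ∑ j ∈ Finset.Icc 1 (2 * m - 1),
                w ^ j * cw ^ (2 * m - j) * ((2 * m).choose j : ℂ) := by
        have hn : 2 * m = (2 * m - 1) + 1 := by omega
        rw [add_pow, Finset.sum_range_succ]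
        conv_lhs => rw [hn]
        rw [Finset.sum_range_succ', ← hn]
        have hIco : ∑ j ∈ Finset.Icc 1 (2 * m - 1),
              w ^ j * cw ^ (2 * m - j) * ((2 * m).choose j : ℂ)
            = ∑ i ∈ Finset.range (2 * m - 1),
              w ^ (i + 1) * cw ^ (2 * m - (i + 1)) * ((2 * m).choose (i + 1) : ℂ) := by
          rw [show Finset.Icc 1 (2 * m - 1) = Finset.Ico 1 (2 * m) by
              rw [← Finset.Ico_add_one_right_eq_Icc]; congr 1; omega,
            Finset.sum_Ico_eq_sum_range]
          apply Finset.sum_congr rfl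
          intro i _
          rw [add_comm 1 i]
        rw [hIco]
        simp only [Nat.sub_self, pow_zero, Nat.choose_self, Nat.cast_one, mul_one, one_mul,
          Nat.sub_zero, Nat.choose_zero_right]
        ring
      rw [hbin]
      unfold Hpoly
      rw [show (A : ℂ) * ((w ^ (2 * m) + cw ^ (2 * m)
          + ∑ j ∈ Finset.Icc 1 (2 * m - 1),
              w ^ j * cw ^ (2 * m - j) * ((2 * m).choose j : ℂ))
          - (w ^ (2 * m) + cw ^ (2 * m)))
        = ∑ j ∈ Finset.Icc 1 (2 * m - 1),
            (A : ℂ) * (w ^ j * cw ^ (2 * m - j) * ((2 * m).choose j : ℂ)) by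
          rw [← Finset.mul_sum]; ring]
      apply Finset.sum_congr rfl
      intro j hj
      simp only [Finset.mem_Icc] at hj
      have h1 : 2 * m - (2 * m - j) = j := by omega
      have h2 : (2 * m).choose (2 * m - j) = (2 * m).choose j := Nat.choose_symm (by omega)
      simp only [h1, h2, hw, hcw, map_mul, mul_pow]
      ring
  · -- biholomorphism
    set r : ℝ := A ^ ((1 : ℝ) / (2 * (m : ℝ))) with hr
    have hr0 : 0 < r := Real.rpow_pos_of_pos hA _
    have hrpow : r ^ (2 * m) = A := by
      rw [hr, ← Real.rpow_natCast (A ^ ((1 : ℝ) / (2 * (m : ℝ)))) (2 * m),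
        ← Real.rpow_mul hA.le]
      have hm0 : (m : ℝ) ≠ 0 := by exact_mod_cast (by omega : m ≠ 0)
      rw [show (1 : ℝ) / (2 * (m : ℝ)) * ((2 * m : ℕ) : ℝ) = 1 by
        push_cast; field_simp]
      exact Real.rpow_one A
    set lam : ℂ := 2 * (r : ℂ) * e with hlam
    have hlam0 : lam ≠ 0 := by
      refine mul_ne_zero (mul_ne_zero two_ne_zero ?_) he0
      exact Complex.ofReal_ne_zero.mpr hr0.ne'
    set f : ℂ × ℂ → ℂ × ℂ := fun z =>
      (lam * z.1, z.2 - 2 * (A : ℂ) * (e * z.1) ^ (2 * m)) with hf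
    set g : ℂ × ℂ → ℂ × ℂ := fun w =>
      (lam⁻¹ * w.1, w.2 + 2 * (A : ℂ) * (e * (lam⁻¹ * w.1)) ^ (2 * m)) with hg
    have hkey : ∀ z : ℂ × ℂ, (f z).2.re + ((f z).1.re) ^ (2 * m) = z.2.re + H z.1 := by
      intro z
      have h1 : (f z).1.re = 2 * r * (e * z.1).re := by
        have : (f z).1 = ((2 * r : ℝ) : ℂ) * (e * z.1) := by
          simp only [hf, hlam]; push_cast; ring
        rw [this, Complex.re_ofReal_mul]
      have h2 : (f z).2.re = z.2.re - 2 * A * ((e * z.1) ^ (2 * m)).re := by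
        have : (f z).2 = z.2 - ((2 * A : ℝ) : ℂ) * (e * z.1) ^ (2 * m) := by
          simp only [hf]; push_cast; ring
        rw [this, Complex.sub_re, Complex.re_ofReal_mul]
      rw [h1, h2, hHdef z.1]
      rw [show (2 * r * (e * z.1).re) ^ (2 * m)
          = 2 ^ (2 * m) * r ^ (2 * m) * ((e * z.1).re) ^ (2 * m) by rw [mul_pow, mul_pow],
        hrpow,
        show (2 * (e * z.1).re) ^ (2 * m) = 2 ^ (2 * m) * ((e * z.1).re) ^ (2 * m) by
          rw [mul_pow]]
      ring
    have hgf : ∀ z : ℂ × ℂ, g (f z) = z := by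
      intro z
      have h1 : lam⁻¹ * (lam * z.1) = z.1 := inv_mul_cancel_left₀ hlam0 z.1
      simp only [hg, hf, h1]
      exact Prod.ext rfl (by ring)
    have hfg : ∀ w : ℂ × ℂ, f (g w) = w := by
      intro w
      have h1 : lam * (lam⁻¹ * w.1) = w.1 := mul_inv_cancel_left₀ hlam0 w.1
      simp only [hf, hg, h1]
      exact Prod.ext rfl (by ring)
    have hfd : Differentiable ℂ f := by
      apply Differentiable.prodMk
      · exact differentiable_fst.const_mul lam
      · exact differentiable_snd.sub
          (((differentiable_fst.const_mul e).pow (2 * m)).const_mul (2 * (A : ℂ)))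
    have hgd : Differentiable ℂ g := by
      apply Differentiable.prodMk
      · exact differentiable_fst.const_mul lam⁻¹
      · exact differentiable_snd.add
          ((((differentiable_fst.const_mul lam⁻¹).const_mul e).pow (2 * m)).const_mul
            (2 * (A : ℂ)))
    show IsBiholoOn (modelM H) (OmegaM m) f
    refine ⟨hfd.differentiableOn, ?_, g, hgd.differentiableOn, ?_, fun z _ => hgf z,
      fun w _ => hfg w⟩
    · intro z hz
      simp only [modelM, Set.mem_setOf_eq] at hz
      simp only [OmegaM, Set.mem_setOf_eq]
      rw [hkey z]
      exact hz
    · intro w hw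
      simp only [OmegaM, Set.mem_setOf_eq] at hw
      simp only [modelM, Set.mem_setOf_eq]
      have := hkey (g w)
      rw [hfg w] at this
      rw [← this]
      exact hw

end
end
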